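/- Let α ∈ (1,2) and let u ∈ C¹([0,1]) with u(0) = u(1) = 0. Then ∫₀¹ (I₀^{1−α/2} u′)(x) · (1−x)^{α/2−1} dx = 0. (This expresses the orthogonality A(u, (1−x)^{α−1}) = 0 of the singular function (1−x)^{α−1} to the range of the bilinear form A.) -/

import Mathlib

open MeasureTheory Set intervalIntegral Function


lemma mySlice {γ : ℝ} (hγ0 : 0 < γ) {t : ℝ} (ht0 : 0 ≤ t) (ht1 : t < 1) :
    ∫ x in t..(1:ℝ), (1-x)^(-γ) * (x-t)^(γ-1)
      = ∫ s in (0:ℝ)..1, (1-s)^(-γ) * s^(γ-1) := by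
  have h1t : (0:ℝ) < 1 - t := by linarith
  set K : ℝ → ℝ := fun x => (1-x)^(-γ) * (x-t)^(γ-1) with hK
  have B := intervalIntegral.integral_comp_mul_add (a := 0) (b := 1) (f := K)
    (c := 1 - t) (ne_of_gt h1t) t
  have hb : (1-t) * 0 + t = t := by ring
  have hb' : (1-t) * 1 + t = 1 := by ring
  rw [hb, hb'] at B
  have A : EqOn (fun s => K ((1-t) * s + t))
      (fun s => (1-t)⁻¹ * ((1-s)^(-γ) * s^(γ-1))) (uIcc 0 1) := by
    intro s hs
    rw [uIcc_of_le (by norm_num)] at hs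
    obtain ⟨hs0, hs1⟩ := hs
    have e1 : 1 - ((1-t) * s + t) = (1-t) * (1-s) := by ring
    have e2 : (1-t) * s + t - t = (1-t) * s := by ring
    simp only [hK, e1, e2]
    rw [Real.mul_rpow (le_of_lt h1t) (by linarith),
        Real.mul_rpow (le_of_lt h1t) hs0]
    have : (1-t)^(-γ) * (1-s)^(-γ) * ((1-t)^(γ-1) * s^(γ-1))
        = ((1-t)^(-γ) * (1-t)^(γ-1)) * ((1-s)^(-γ) * s^(γ-1)) := by ring
    rw [this, ← Real.rpow_add h1t, show -γ + (γ-1) = -1 by ring, Real.rpow_neg_one]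
  rw [intervalIntegral.integral_congr A] at B
  rw [intervalIntegral.integral_const_mul] at B
  have hne : (1-t)⁻¹ ≠ 0 := inv_ne_zero (ne_of_gt h1t)
  rw [smul_eq_mul] at B
  field_simp at B
  linarith [B]


lemma kernel_intInt {γ : ℝ} (hγ : 0 < γ) (x : ℝ) :
    IntervalIntegrable (fun t => (x - t) ^ (γ - 1)) volume 0 x := by
  have h := (intervalIntegrable_rpow' (a := 0) (b := x) (r := γ - 1) (by linarith)).comp_sub_left x
  simpa using h.symm

lemma kernel_ioo {γ : ℝ} (hγ : 0 < γ) {x : ℝ} (hx : 0 ≤ x) :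
    IntegrableOn (fun t => (x - t) ^ (γ - 1)) (Ioo 0 x) := by
  have h := kernel_intInt hγ x
  rw [intervalIntegrable_iff_integrableOn_Ioo_of_le hx] at h
  exact h

lemma kernel_integral {γ : ℝ} (hγ : 0 < γ) {x : ℝ} (hx : 0 ≤ x) :
    ∫ t in Ioo (0:ℝ) x, (x - t) ^ (γ - 1) = x ^ γ / γ := by
  rw [← integral_Ioc_eq_integral_Ioo, ← intervalIntegral.integral_of_le hx]
  rw [intervalIntegral.integral_comp_sub_left (fun s => s ^ (γ-1)) x]
  simp only [sub_self, sub_zero]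
  rw [integral_rpow (Or.inl (by linarith))]
  rw [Real.zero_rpow (by linarith : γ - 1 + 1 ≠ 0)]
  ring_nf

section key
variable {γ M : ℝ} {g : ℝ → ℝ}

lemma key (hγ0 : 0 < γ) (hγ1 : γ < 1) (hgm : Measurable g)
    (hM0 : 0 ≤ M) (hgb : ∀ t ∈ Ioo (0:ℝ) 1, |g t| ≤ M) :
    ∫ x in Ioo (0:ℝ) 1, (∫ t in Ioo 0 x, (x - t) ^ (γ - 1) * g t) * (1 - x) ^ (-γ)
      = ∫ t in Ioo (0:ℝ) 1,
          g t * ∫ x in Ioo t 1, (1 - x) ^ (-γ) * (x - t) ^ (γ - 1) := by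
  set μ := volume.restrict (Ioo (0:ℝ) 1) with hμ
  set F : ℝ → ℝ → ℝ :=
    fun x t => if t < x then (1 - x) ^ (-γ) * ((x - t) ^ (γ - 1) * g t) else 0 with hF
  -- measurability
  have hFm : Measurable (uncurry F) := by
    apply Measurable.ite (measurableSet_lt measurable_snd measurable_fst) _ measurable_const
    apply Measurable.mul
    · fun_prop
    · exact Measurable.mul (by fun_prop) (hgm.comp measurable_snd)
  have hFsm : AEStronglyMeasurable (uncurry F) (μ.prod μ) := hFm.aestronglyMeasurable
  -- for each x in (0,1): F x · equals an indicator a.e.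
  have hind : ∀ x ∈ Ioo (0:ℝ) 1, ∀ t ∈ Ioo (0:ℝ) 1,
      F x t = (Ioo (0:ℝ) x).indicator
        (fun t => (1 - x) ^ (-γ) * ((x - t) ^ (γ - 1) * g t)) t := by
    intro x hx t ht
    by_cases h : t < x
    · rw [hF]; simp only [h, if_true]
      rw [indicator_of_mem (show t ∈ Ioo (0:ℝ) x from ⟨ht.1, h⟩)]
    · rw [hF]; simp only [h, if_false]
      rw [indicator_of_notMem (fun hc => h hc.2)]
  -- integrability of the x-slice
  have hslice : ∀ x ∈ Ioo (0:ℝ) 1,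
      IntegrableOn (fun t => (1 - x) ^ (-γ) * ((x - t) ^ (γ - 1) * g t)) (Ioo 0 x) := by
    intro x hx
    apply Integrable.const_mul
    apply Integrable.mono ((kernel_ioo hγ0 hx.1.le).const_mul M)
    · exact (Measurable.mul (by fun_prop) hgm).aestronglyMeasurable
    · filter_upwards [ae_restrict_mem measurableSet_Ioo] with t ht
      have hxt : (0:ℝ) ≤ (x - t) ^ (γ - 1) := Real.rpow_nonneg (by linarith [ht.2]) _
      have hgt : |g t| ≤ M := hgb t ⟨ht.1, lt_trans ht.2 hx.2⟩
      rw [Real.norm_eq_abs, Real.norm_eq_abs, abs_mul, abs_of_nonneg hxt,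
        abs_of_nonneg (by positivity : (0:ℝ) ≤ M * (x - t) ^ (γ - 1))]
      calc (x - t) ^ (γ - 1) * |g t| ≤ (x - t) ^ (γ - 1) * M := by
            exact mul_le_mul_of_nonneg_left hgt hxt
        _ = M * (x - t) ^ (γ - 1) := mul_comm _ _
  have hFxInt : ∀ x ∈ Ioo (0:ℝ) 1, Integrable (fun t => F x t) μ := by
    intro x hx
    have : (fun t => F x t) =ᵐ[μ] (Ioo (0:ℝ) x).indicator
        (fun t => (1 - x) ^ (-γ) * ((x - t) ^ (γ - 1) * g t)) := by
      filter_upwards [ae_restrict_mem measurableSet_Ioo] with t ht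
      exact hind x hx t ht
    rw [integrable_congr this, hμ, integrable_indicator_iff measurableSet_Ioo,
      IntegrableOn, Measure.restrict_restrict measurableSet_Ioo,
      inter_eq_self_of_subset_left (Ioo_subset_Ioo le_rfl hx.2.le)]
    exact hslice x hx
  -- value of the inner t-integral
  have hval : ∀ x ∈ Ioo (0:ℝ) 1, ∫ t, F x t ∂μ
      = (∫ t in Ioo (0:ℝ) x, (x - t) ^ (γ - 1) * g t) * (1 - x) ^ (-γ) := by
    intro x hx
    have heq : (fun t => F x t) =ᵐ[μ] (Ioo (0:ℝ) x).indicator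
        (fun t => (1 - x) ^ (-γ) * ((x - t) ^ (γ - 1) * g t)) := by
      filter_upwards [ae_restrict_mem measurableSet_Ioo] with t ht
      exact hind x hx t ht
    rw [integral_congr_ae heq, hμ, MeasureTheory.integral_indicator measurableSet_Ioo,
      Measure.restrict_restrict measurableSet_Ioo,
      inter_eq_self_of_subset_left (Ioo_subset_Ioo le_rfl hx.2.le),
      MeasureTheory.integral_const_mul]
    ring
  -- integrability of the norm-integral
  have hnormInt : Integrable (fun x => ∫ t, ‖F x t‖ ∂μ) μ := by
    have hψ : Integrable (fun x : ℝ => M / γ * (1 - x) ^ (-γ)) μ := by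
      apply Integrable.const_mul
      have h := (intervalIntegrable_rpow' (a := 0) (b := 1) (r := -γ)
        (by linarith)).comp_sub_left 1
      simp only [sub_zero, sub_self] at h
      have h2 := h.symm
      rw [intervalIntegrable_iff_integrableOn_Ioo_of_le (by norm_num)] at h2
      exact h2
    apply Integrable.mono hψ (hFsm.norm.integral_prod_right')
    filter_upwards [ae_restrict_mem measurableSet_Ioo] with x hx
    have h1x : (0:ℝ) ≤ (1 - x) ^ (-γ) := Real.rpow_nonneg (by linarith [hx.2]) _
    have e1 : ∫ t, ‖F x t‖ ∂μ = ∫ t in Ioo (0:ℝ) x,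
        ‖(1 - x) ^ (-γ) * ((x - t) ^ (γ - 1) * g t)‖ := by
      have heq : (fun t => ‖F x t‖) =ᵐ[μ] (Ioo (0:ℝ) x).indicator
          (fun t => ‖(1 - x) ^ (-γ) * ((x - t) ^ (γ - 1) * g t)‖) := by
        filter_upwards [ae_restrict_mem measurableSet_Ioo] with t ht
        rw [hind x hx t ht, norm_indicator_eq_indicator_norm]
      rw [integral_congr_ae heq, hμ, MeasureTheory.integral_indicator measurableSet_Ioo,
        Measure.restrict_restrict measurableSet_Ioo,
        inter_eq_self_of_subset_left (Ioo_subset_Ioo le_rfl hx.2.le)]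
    have e2 : ∫ t in Ioo (0:ℝ) x, ‖(1 - x) ^ (-γ) * ((x - t) ^ (γ - 1) * g t)‖
        ≤ ∫ t in Ioo (0:ℝ) x, (1 - x) ^ (-γ) * (M * (x - t) ^ (γ - 1)) := by
      apply integral_mono_of_nonneg
      · filter_upwards with t; positivity
      · exact (((kernel_ioo hγ0 hx.1.le).const_mul M).const_mul _)
      · filter_upwards [ae_restrict_mem measurableSet_Ioo] with t ht
        have hxt : (0:ℝ) ≤ (x - t) ^ (γ - 1) := Real.rpow_nonneg (by linarith [ht.2]) _
        have hgt : |g t| ≤ M := hgb t ⟨ht.1, lt_trans ht.2 hx.2⟩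
        rw [norm_mul, norm_mul, Real.norm_eq_abs (g t), Real.norm_eq_abs,
          Real.norm_eq_abs, abs_of_nonneg h1x, abs_of_nonneg hxt]
        apply mul_le_mul_of_nonneg_left _ h1x
        calc (x - t) ^ (γ - 1) * |g t| ≤ (x - t) ^ (γ - 1) * M :=
              mul_le_mul_of_nonneg_left hgt hxt
          _ = M * (x - t) ^ (γ - 1) := mul_comm _ _
    have e3 : ∫ t in Ioo (0:ℝ) x, (1 - x) ^ (-γ) * (M * (x - t) ^ (γ - 1))
        = (1 - x) ^ (-γ) * (M * (x ^ γ / γ)) := by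
      rw [MeasureTheory.integral_const_mul, MeasureTheory.integral_const_mul, kernel_integral hγ0 hx.1.le]
    have hxγ : x ^ γ ≤ 1 := Real.rpow_le_one hx.1.le hx.2.le hγ0.le
    have hnn : (0:ℝ) ≤ ∫ y, |F x y| ∂μ := integral_nonneg fun t => abs_nonneg _
    simp only [Function.uncurry_apply_pair, Real.norm_eq_abs]
    rw [abs_of_nonneg hnn, abs_of_nonneg (by positivity)]
    show (∫ t, ‖F x t‖ ∂μ) ≤ M / γ * (1 - x) ^ (-γ)
    calc ∫ t, ‖F x t‖ ∂μ ≤ (1 - x) ^ (-γ) * (M * (x ^ γ / γ)) := by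
          rw [e1]; rw [← e3]; exact e2
      _ ≤ (1 - x) ^ (-γ) * (M * (1 / γ)) := by
          apply mul_le_mul_of_nonneg_left _ h1x
          apply mul_le_mul_of_nonneg_left _ hM0
          gcongr
      _ = M / γ * (1 - x) ^ (-γ) := by ring
  -- product integrability and Fubini
  have hprod : Integrable (uncurry F) (μ.prod μ) := by
    rw [integrable_prod_iff hFsm]
    constructor
    · filter_upwards [ae_restrict_mem measurableSet_Ioo] with x hx
      exact hFxInt x hx
    · exact hnormInt
  have hswap := integral_integral_swap hprod
  -- identify both sides
  have hval2 : ∀ t ∈ Ioo (0:ℝ) 1, ∫ x, F x t ∂μ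
      = g t * ∫ x in Ioo t 1, (1 - x) ^ (-γ) * (x - t) ^ (γ - 1) := by
    intro t ht
    have heq : (fun x => F x t) =ᵐ[μ] (Ioo t 1).indicator
        (fun x => (1 - x) ^ (-γ) * (x - t) ^ (γ - 1) * g t) := by
      filter_upwards [ae_restrict_mem measurableSet_Ioo] with x hx
      by_cases h : t < x
      · rw [hF]; simp only [h, if_true]
        rw [indicator_of_mem (show x ∈ Ioo t 1 from ⟨h, hx.2⟩)]
        ring
      · rw [hF]; simp only [h, if_false]
        rw [indicator_of_notMem (fun hc => h hc.1)]
    rw [integral_congr_ae heq, hμ, MeasureTheory.integral_indicator measurableSet_Ioo,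
      Measure.restrict_restrict measurableSet_Ioo,
      inter_eq_self_of_subset_left (Ioo_subset_Ioo ht.1.le le_rfl),
      MeasureTheory.integral_mul_const]
    ring
  calc ∫ x in Ioo (0:ℝ) 1, (∫ t in Ioo 0 x, (x - t) ^ (γ - 1) * g t) * (1 - x) ^ (-γ)
      = ∫ x, (∫ t, F x t ∂μ) ∂μ := by
        apply setIntegral_congr_ae measurableSet_Ioo
        filter_upwards with x hx
        exact (hval x hx).symm
    _ = ∫ t, (∫ x, F x t ∂μ) ∂μ := hswap
    _ = ∫ t in Ioo (0:ℝ) 1,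
          g t * ∫ x in Ioo t 1, (1 - x) ^ (-γ) * (x - t) ^ (γ - 1) := by
        apply setIntegral_congr_ae measurableSet_Ioo
        filter_upwards with t ht
        exact hval2 t ht
end key

/-- Left Riemann–Liouville fractional integral of order `γ` on `(0,1)`. -/
noncomputable def I0 (γ : ℝ) (f : ℝ → ℝ) (x : ℝ) : ℝ :=
  (1 / Real.Gamma γ) * ∫ t in Ioo (0:ℝ) x, (x - t) ^ (γ - 1) * f t

/-- For `α ∈ (1,2)` and `u ∈ C¹([0,1])` with `u(0) = u(1) = 0`,
`∫₀¹ (I₀^{1-α/2} u')(x) (1-x)^{α/2-1} dx = 0`, expressing the orthogonality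
`A(u, (1-x)^{α-1}) = 0`. -/
theorem stmt16 (α : ℝ) (hα : α ∈ Ioo (1:ℝ) 2) (u : ℝ → ℝ)
    (hu : ContDiffOn ℝ 1 u (Icc (0:ℝ) 1)) (h0 : u 0 = 0) (h1 : u 1 = 0) :
    ∫ x in Ioo (0:ℝ) 1, I0 (1 - α/2) (deriv u) x * (1 - x) ^ (α/2 - 1) = 0 := by
  obtain ⟨hα1, hα2⟩ := hα
  set γ : ℝ := 1 - α/2 with hγdef
  have hγ0 : 0 < γ := by rw [hγdef]; linarith
  have hγ1 : γ < 1 := by rw [hγdef]; linarith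
  have hβγ : α/2 - 1 = -γ := by rw [hγdef]; ring
  have hG : ContinuousOn (derivWithin u (Icc 0 1)) (Icc (0:ℝ) 1) :=
    hu.continuousOn_derivWithin (uniqueDiffOn_Icc one_pos) le_rfl
  have hEq : ∀ x ∈ Ioo (0:ℝ) 1, derivWithin u (Icc 0 1) x = deriv u x := fun x hx =>
    derivWithin_of_mem_nhds (Icc_mem_nhds hx.1 hx.2)
  obtain ⟨M, hM⟩ := (isCompact_Icc (a := (0:ℝ)) (b := 1)).exists_bound_of_continuousOn hG
  have hM0 : 0 ≤ M := le_trans (norm_nonneg _) (hM 0 (by norm_num))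
  have hgb : ∀ t ∈ Ioo (0:ℝ) 1, |deriv u t| ≤ M := by
    intro t ht
    rw [← hEq t ht, ← Real.norm_eq_abs]
    exact hM t (Ioo_subset_Icc_self ht)
  have hgm : Measurable (deriv u) := measurable_deriv u
  have hderiv : ∀ x ∈ Ioo (0:ℝ) 1, HasDerivAt u (deriv u x) x := by
    intro x hx
    exact (((hu.differentiableOn one_ne_zero) x (Ioo_subset_Icc_self hx)).differentiableAt
      (Icc_mem_nhds hx.1 hx.2)).hasDerivAt
  have hint : IntervalIntegrable (deriv u) volume 0 1 := by
    rw [intervalIntegrable_iff_integrableOn_Ioo_of_le (by norm_num)]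
    exact (((hG.integrableOn_Icc).mono_set Ioo_subset_Icc_self).congr_fun hEq
      measurableSet_Ioo)
  have hftc : ∫ t in Ioo (0:ℝ) 1, deriv u t = 0 := by
    have h := intervalIntegral.integral_eq_sub_of_hasDerivAt_of_le (by norm_num : (0:ℝ) ≤ 1)
      hu.continuousOn hderiv hint
    rw [intervalIntegral.integral_of_le (by norm_num : (0:ℝ) ≤ 1),
      integral_Ioc_eq_integral_Ioo] at h
    rw [h, h0, h1, sub_zero]
  have hre : ∀ x ∈ Ioo (0:ℝ) 1, I0 γ (deriv u) x * (1 - x) ^ (α/2 - 1)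
      = (1 / Real.Gamma γ) *
        ((∫ t in Ioo (0:ℝ) x, (x - t) ^ (γ - 1) * deriv u t) * (1 - x) ^ (-γ)) := by
    intro x hx
    rw [I0, hβγ]; ring
  calc ∫ x in Ioo (0:ℝ) 1, I0 γ (deriv u) x * (1 - x) ^ (α/2 - 1)
      = ∫ x in Ioo (0:ℝ) 1, (1 / Real.Gamma γ) *
          ((∫ t in Ioo (0:ℝ) x, (x - t) ^ (γ - 1) * deriv u t) * (1 - x) ^ (-γ)) := by
        apply setIntegral_congr_ae measurableSet_Ioo
        filter_upwards with x hx
        exact hre x hx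
    _ = (1 / Real.Gamma γ) * ∫ x in Ioo (0:ℝ) 1,
          (∫ t in Ioo (0:ℝ) x, (x - t) ^ (γ - 1) * deriv u t) * (1 - x) ^ (-γ) :=
        MeasureTheory.integral_const_mul _ _
    _ = (1 / Real.Gamma γ) * ∫ t in Ioo (0:ℝ) 1,
          deriv u t * ∫ x in Ioo t 1, (1 - x) ^ (-γ) * (x - t) ^ (γ - 1) := by
        rw [key hγ0 hγ1 hgm hM0 hgb]
    _ = (1 / Real.Gamma γ) * ∫ t in Ioo (0:ℝ) 1,
          deriv u t * ∫ s in (0:ℝ)..1, (1 - s) ^ (-γ) * s ^ (γ - 1) := by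
        congr 1
        apply setIntegral_congr_ae measurableSet_Ioo
        filter_upwards with t ht
        congr 1
        rw [← integral_Ioc_eq_integral_Ioo,
          ← intervalIntegral.integral_of_le ht.2.le]
        exact mySlice hγ0 ht.1.le ht.2
    _ = (1 / Real.Gamma γ) * ((∫ t in Ioo (0:ℝ) 1, deriv u t) *
          ∫ s in (0:ℝ)..1, (1 - s) ^ (-γ) * s ^ (γ - 1)) := by
        rw [MeasureTheory.integral_mul_const]
    _ = 0 := by rw [hftc]; ring
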